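/- For every f:𝒳→ℝ with E[f(X)|S=0]=0, lim_{ε→0⁺} (D_KL(P̃_{Y|S=0}‖P_{Y|S=1}) − D_KL(P_{Y|S=0}‖P_{Y|S=1}))/ε = E[g(Y)·log(P_{Y|S=0}(Y)/P_{Y|S=1}(Y)) | S=0], where g(y) = E[f(X)|Y=y,S=0]. -/

import Mathlib

open Filter Topology

/-- Kullback–Leibler divergence between distributions on a finite set. -/
noncomputable def KLdiv {α : Type*} [Fintype α] (P Q : α → ℝ) : ℝ :=
  ∑ a, P a * Real.log (P a / Q a)

/-- For every `f : 𝒳 → ℝ` with `E[f(X)|S=0] = 0`,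
`lim_{ε→0⁺} (D_KL(P̃_{Y|S=0}‖P_{Y|S=1}) − D_KL(P_{Y|S=0}‖P_{Y|S=1}))/ε
  = E[g(Y)·log(P_{Y|S=0}(Y)/P_{Y|S=1}(Y)) | S=0]`, where `g(y) = E[f(X)|Y=y,S=0]`.
Here `P0 = P_{X|S=0}`, `P1 = P_{X|S=1}`, `W x y = W_{Y|X}(y|x)` is the channel,
`Q0 = P_{Y|S=0} = W ∘ P0`, `Q1 = P_{Y|S=1} = W ∘ P1` (both full support),
`P̃_{X|S=0}(x) = P0(x)(1 + ε f(x))`, and `P̃_{Y|S=0} = W ∘ P̃_{X|S=0}`. -/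
theorem stmt12
    {𝒳 𝒴 : Type*} [Fintype 𝒳] [Fintype 𝒴]
    (P0 P1 : 𝒳 → ℝ)
    (hP0pos : ∀ x, 0 < P0 x) (hP0sum : ∑ x, P0 x = 1)
    (hP1pos : ∀ x, 0 < P1 x) (hP1sum : ∑ x, P1 x = 1)
    (W : 𝒳 → 𝒴 → ℝ) (hWnn : ∀ x y, 0 ≤ W x y) (hWsum : ∀ x, ∑ y, W x y = 1)
    (Q0 Q1 : 𝒴 → ℝ)
    (hQ0 : ∀ y, Q0 y = ∑ x, P0 x * W x y) (hQ1 : ∀ y, Q1 y = ∑ x, P1 x * W x y)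
    (hQ0pos : ∀ y, 0 < Q0 y) (hQ1pos : ∀ y, 0 < Q1 y)
    (f : 𝒳 → ℝ) (hf : ∑ x, P0 x * f x = 0)
    (g : 𝒴 → ℝ) (hg : ∀ y, g y = (∑ x, P0 x * W x y * f x) / Q0 y) :
    Tendsto
      (fun ε : ℝ =>
        (KLdiv (fun y => ∑ x, P0 x * (1 + ε * f x) * W x y) Q1 - KLdiv Q0 Q1) / ε)
      (nhdsWithin 0 (Set.Ioi 0))
      (nhds (∑ y, Q0 y * g y * Real.log (Q0 y / Q1 y))) := by
  set T : 𝒴 → ℝ := fun y => ∑ x, P0 x * W x y * f x with hT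
  -- sum of T is zero
  have hTsum : ∑ y, T y = 0 := by
    rw [Finset.sum_comm]
    have : ∀ x ∈ Finset.univ, ∑ y, P0 x * W x y * f x = P0 x * f x := by
      intro x _
      rw [← Finset.sum_mul, ← Finset.mul_sum]
      rw [hWsum x]; ring
    rw [Finset.sum_congr rfl this, hf]
  have hQg : ∀ y, Q0 y * g y = T y := by
    intro y
    rw [hg y]
    field_simp
    exact mul_div_cancel_left₀ _ (hQ0pos y).ne'
  -- rewrite the perturbed distribution
  have hpert : ∀ (ε : ℝ) (y : 𝒴), (∑ x, P0 x * (1 + ε * f x) * W x y) = Q0 y + ε * T y := by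
    intro ε y
    rw [hQ0 y, hT, Finset.mul_sum, ← Finset.sum_add_distrib]
    apply Finset.sum_congr rfl
    intro x _
    ring
  -- each term has a derivative at 0
  have hderiv : ∀ y : 𝒴, HasDerivAt
      (fun ε : ℝ => (Q0 y + ε * T y) * Real.log ((Q0 y + ε * T y) / Q1 y))
      (T y * (Real.log (Q0 y / Q1 y) + 1)) 0 := by
    intro y
    have hu : HasDerivAt (fun ε : ℝ => Q0 y + ε * T y) (T y) 0 := by
      simpa using (hasDerivAt_const (0:ℝ) (Q0 y)).fun_add
        ((hasDerivAt_id (0:ℝ)).mul_const (T y))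
    have hu0 : (Q0 y + (0:ℝ) * T y) ≠ 0 := by
      simpa using (hQ0pos y).ne'
    have hlog : HasDerivAt (fun ε : ℝ => Real.log ((Q0 y + ε * T y) / Q1 y))
        (T y / (Q0 y + (0:ℝ) * T y)) 0 := by
      have h1 : HasDerivAt (fun ε : ℝ => (Q0 y + ε * T y) / Q1 y)
          (T y / Q1 y) 0 := hu.div_const _
      have h2 := h1.log (by
        simp only [zero_mul, add_zero]
        exact (div_pos (hQ0pos y) (hQ1pos y)).ne')
      convert h2 using 1
      rw [div_div_div_cancel_right₀ (hQ1pos y).ne']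
    have : HasDerivAt (fun ε : ℝ => (Q0 y + ε * T y) * Real.log ((Q0 y + ε * T y) / Q1 y)) _ 0 :=
      hu.fun_mul hlog
    convert this using 1
    simp only [zero_mul, add_zero]
    rw [mul_comm (Q0 y), div_mul_cancel₀ _ (hQ0pos y).ne']
    ring
  have hsumderiv : HasDerivAt
      (fun ε : ℝ => ∑ y, (Q0 y + ε * T y) * Real.log ((Q0 y + ε * T y) / Q1 y))
      (∑ y, T y * (Real.log (Q0 y / Q1 y) + 1)) 0 := by
    exact HasDerivAt.fun_sum (fun y _ => hderiv y)
  -- identify the derivative with the target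
  have hDeq : (∑ y, T y * (Real.log (Q0 y / Q1 y) + 1))
      = ∑ y, Q0 y * g y * Real.log (Q0 y / Q1 y) := by
    have : ∀ y ∈ Finset.univ, T y * (Real.log (Q0 y / Q1 y) + 1)
        = Q0 y * g y * Real.log (Q0 y / Q1 y) + T y := by
      intro y _
      rw [hQg y]; ring
    rw [Finset.sum_congr rfl this, Finset.sum_add_distrib, hTsum, add_zero]
  rw [← hDeq]
  have hslope := hasDerivAt_iff_tendsto_slope.mp hsumderiv
  have hmono : 𝓝[>] (0:ℝ) ≤ 𝓝[≠] (0:ℝ) :=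
    nhdsWithin_mono 0 (fun x hx => ne_of_gt hx)
  have h2 := hslope.mono_left hmono
  refine h2.congr' ?_
  filter_upwards [self_mem_nhdsWithin] with ε hε
  have hε0 : ε ≠ 0 := ne_of_gt hε
  have hK : KLdiv (fun y => ∑ x, P0 x * (1 + ε * f x) * W x y) Q1
      = ∑ y, (Q0 y + ε * T y) * Real.log ((Q0 y + ε * T y) / Q1 y) := by
    unfold KLdiv
    exact Finset.sum_congr rfl fun y _ => by
      rw [show (fun y => ∑ x, P0 x * (1 + ε * f x) * W x y) y = Q0 y + ε * T y from hpert ε y]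
  have hK0 : KLdiv Q0 Q1
      = ∑ y, (Q0 y + (0:ℝ) * T y) * Real.log ((Q0 y + (0:ℝ) * T y) / Q1 y) := by
    unfold KLdiv; simp
  rw [slope_def_field, hK, ← hK0, sub_zero]
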